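/- Over the polar triangle family, the orthocenter of Q₁Q₂Q₃ lies on the directrix x = f of the parabola: the orthocenter's x-coordinate equals f for all admissible y₁. -/

import Mathlib

set_option maxHeartbeats 2000000 in
theorem polar_orthocenter_on_directrix (f y₁ Δ : ℝ) (hf : 0 < f) (Q₁ Q₂ Q₃ H : ℝ × ℝ)
    (hΔ : Δ = Real.sqrt (y₁ ^ 4 + 8 * f ^ 2 * y₁ ^ 2 + 16 * (8 * Real.sqrt 2 - 11) * f ^ 4))
    (hden₁ : 2 * (2 * Real.sqrt 2 + 3) * y₁ ^ 2 - 8 * f ^ 2 ≠ 0)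
    (hden₃ : (3 + 2 * Real.sqrt 2) * y₁ ^ 2 - 4 * f ^ 2 ≠ 0)
    (hQ₁ : Q₁ = ((1 + Real.sqrt 2) * ((4 * f * y₁ + Δ) * y₁ /
        (2 * (2 * Real.sqrt 2 + 3) * y₁ ^ 2 - 8 * f ^ 2)),
      (1 + Real.sqrt 2) * (((1 + Real.sqrt 2) * y₁ ^ 3 - 4 * (1 + Real.sqrt 2) * f ^ 2 * y₁ -
        2 * Δ * f) / (2 * (2 * Real.sqrt 2 + 3) * y₁ ^ 2 - 8 * f ^ 2))))
    (hQ₂ : Q₂ = ((1 + Real.sqrt 2) * ((4 * f * y₁ - Δ) * y₁ /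
        (2 * (2 * Real.sqrt 2 + 3) * y₁ ^ 2 - 8 * f ^ 2)),
      (1 + Real.sqrt 2) * (((1 + Real.sqrt 2) * y₁ ^ 3 - 4 * (1 + Real.sqrt 2) * f ^ 2 * y₁ +
        2 * Δ * f) / (2 * (2 * Real.sqrt 2 + 3) * y₁ ^ 2 - 8 * f ^ 2))))
    (hQ₃ : Q₃ = ((1 + Real.sqrt 2) * ((5 - 3 * Real.sqrt 2) *
        ((1 + 2 * Real.sqrt 2) * y₁ ^ 2 - 28 * f ^ 2) * f /
        (7 * ((3 + 2 * Real.sqrt 2) * y₁ ^ 2 - 4 * f ^ 2))),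
      (1 + Real.sqrt 2) * (-(8 * f ^ 2 * y₁) /
        ((3 + 2 * Real.sqrt 2) * y₁ ^ 2 - 4 * f ^ 2))))
    (hndg : (Q₂.1 - Q₁.1) * (Q₃.2 - Q₁.2) - (Q₂.2 - Q₁.2) * (Q₃.1 - Q₁.1) ≠ 0)
    (hH₁ : (H.1 - Q₁.1) * (Q₂.1 - Q₃.1) + (H.2 - Q₁.2) * (Q₂.2 - Q₃.2) = 0)
    (hH₂ : (H.1 - Q₂.1) * (Q₃.1 - Q₁.1) + (H.2 - Q₂.2) * (Q₃.2 - Q₁.2) = 0) :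
    H.1 = f := by
  have hs : Real.sqrt 2 ^ 2 = 2 := Real.sq_sqrt (by norm_num)
  have hs0 : (0:ℝ) ≤ Real.sqrt 2 := Real.sqrt_nonneg 2
  have hs1 : (11:ℝ)/8 ≤ Real.sqrt 2 := by nlinarith [hs, hs0]
  have hP : (0:ℝ) ≤ y₁ ^ 4 + 8 * f ^ 2 * y₁ ^ 2 + 16 * (8 * Real.sqrt 2 - 11) * f ^ 4 := by
    nlinarith [sq_nonneg (y₁^2), sq_nonneg (f^2), sq_nonneg (f*y₁), hs1]
  have hΔ2 : Δ ^ 2 = y₁ ^ 4 + 8 * f ^ 2 * y₁ ^ 2 + 16 * (8 * Real.sqrt 2 - 11) * f ^ 4 := by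
    rw [hΔ]; exact Real.sq_sqrt hP
  obtain ⟨u, hu_eq⟩ : ∃ u : ℝ, u = 14 * ((3 + 2 * Real.sqrt 2) * y₁ ^ 2 - 4 * f ^ 2) := ⟨_, rfl⟩
  have hu : u ≠ 0 := by rw [hu_eq]; exact mul_ne_zero (by norm_num) hden₃
  have hD1 : 2 * (2 * Real.sqrt 2 + 3) * y₁ ^ 2 - 8 * f ^ 2 = 2 * ((3 + 2 * Real.sqrt 2) * y₁ ^ 2 - 4 * f ^ 2) := by ring
  have hD3 : (3 + 2 * Real.sqrt 2) * y₁ ^ 2 - 4 * f ^ 2 ≠ 0 := hden₃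
  have q1x : u * Q₁.1 = 7 * (1 + Real.sqrt 2) * (4 * f * y₁ + Δ) * y₁ := by
    rw [hQ₁, hu_eq, hD1]; field_simp; ring
  have q2x : u * Q₂.1 = 7 * (1 + Real.sqrt 2) * (4 * f * y₁ - Δ) * y₁ := by
    rw [hQ₂, hu_eq, hD1]; field_simp; ring
  have q1y : u * Q₁.2 = 7 * (1 + Real.sqrt 2) * (((1 + Real.sqrt 2) * y₁ ^ 3 - 4 * (1 + Real.sqrt 2) * f ^ 2 * y₁) - 2 * Δ * f) := by
    rw [hQ₁, hu_eq, hD1]; field_simp; ring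
  have q2y : u * Q₂.2 = 7 * (1 + Real.sqrt 2) * (((1 + Real.sqrt 2) * y₁ ^ 3 - 4 * (1 + Real.sqrt 2) * f ^ 2 * y₁) + 2 * Δ * f) := by
    rw [hQ₂, hu_eq, hD1]; field_simp; ring
  have q3x : u * Q₃.1 = 2 * (1 + Real.sqrt 2) * ((5 - 3 * Real.sqrt 2) * ((1 + 2 * Real.sqrt 2) * y₁ ^ 2 - 28 * f ^ 2)) * f := by
    rw [hQ₃, hu_eq]; field_simp; ring
  have q3y : u * Q₃.2 = 14 * (1 + Real.sqrt 2) * (-(8 * f ^ 2 * y₁)) := by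
    rw [hQ₃, hu_eq]; field_simp
  obtain ⟨p1x, hp1x⟩ : ∃ p : ℝ, p = 7 * (1 + Real.sqrt 2) * (4 * f * y₁ + Δ) * y₁ := ⟨_, rfl⟩
  obtain ⟨p2x, hp2x⟩ : ∃ p : ℝ, p = 7 * (1 + Real.sqrt 2) * (4 * f * y₁ - Δ) * y₁ := ⟨_, rfl⟩
  obtain ⟨p1y, hp1y⟩ : ∃ p : ℝ, p = 7 * (1 + Real.sqrt 2) * (((1 + Real.sqrt 2) * y₁ ^ 3 - 4 * (1 + Real.sqrt 2) * f ^ 2 * y₁) - 2 * Δ * f) := ⟨_, rfl⟩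
  obtain ⟨p2y, hp2y⟩ : ∃ p : ℝ, p = 7 * (1 + Real.sqrt 2) * (((1 + Real.sqrt 2) * y₁ ^ 3 - 4 * (1 + Real.sqrt 2) * f ^ 2 * y₁) + 2 * Δ * f) := ⟨_, rfl⟩
  obtain ⟨p3x, hp3x⟩ : ∃ p : ℝ, p = 2 * (1 + Real.sqrt 2) * ((5 - 3 * Real.sqrt 2) * ((1 + 2 * Real.sqrt 2) * y₁ ^ 2 - 28 * f ^ 2)) * f := ⟨_, rfl⟩
  obtain ⟨p3y, hp3y⟩ : ∃ p : ℝ, p = 14 * (1 + Real.sqrt 2) * (-(8 * f ^ 2 * y₁)) := ⟨_, rfl⟩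
  rw [← hp1x] at q1x
  rw [← hp2x] at q2x
  rw [← hp1y] at q1y
  rw [← hp2y] at q2y
  rw [← hp3x] at q3x
  rw [← hp3y] at q3y
  have h1 : (u * H.1 - u * Q₁.1) * (u * Q₂.1 - u * Q₃.1) + (u * H.2 - u * Q₁.2) * (u * Q₂.2 - u * Q₃.2) = 0 := by
    linear_combination u ^ 2 * hH₁
  have h2 : (u * H.1 - u * Q₂.1) * (u * Q₃.1 - u * Q₁.1) + (u * H.2 - u * Q₂.2) * (u * Q₃.2 - u * Q₁.2) = 0 := by
    linear_combination u ^ 2 * hH₂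
  have hN : (u * Q₂.1 - u * Q₁.1) * (u * Q₃.2 - u * Q₁.2) - (u * Q₂.2 - u * Q₁.2) * (u * Q₃.1 - u * Q₁.1) ≠ 0 := by
    have e : (u * Q₂.1 - u * Q₁.1) * (u * Q₃.2 - u * Q₁.2) - (u * Q₂.2 - u * Q₁.2) * (u * Q₃.1 - u * Q₁.1) =
        u ^ 2 * ((Q₂.1 - Q₁.1) * (Q₃.2 - Q₁.2) - (Q₂.2 - Q₁.2) * (Q₃.1 - Q₁.1)) := by ring
    rw [e]; exact mul_ne_zero (pow_ne_zero 2 hu) hndg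
  rw [q1x, q2x, q3x, q1y, q2y, q3y] at h1 h2 hN
  have hlin : ((p2x - p1x) * (p3y - p1y) - (p2y - p1y) * (p3x - p1x)) * (u * H.1) =
      (p1x * (p2x - p3x) + p1y * (p2y - p3y)) * (p3y - p1y) - (p2x * (p3x - p1x) + p2y * (p3y - p1y)) * (p2y - p3y) := by
    linear_combination (p3y - p1y) * h1 - (p2y - p3y) * h2
  have hE : (p1x * (p2x - p3x) + p1y * (p2y - p3y)) * (p3y - p1y) - (p2x * (p3x - p1x) + p2y * (p3y - p1y)) * (p2y - p3y) =
      ((p2x - p1x) * (p3y - p1y) - (p2y - p1y) * (p3x - p1x)) * (u * f) := by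
    subst hp1x hp2x hp1y hp2y hp3x hp3y hu_eq
    linear_combination ((-702464:ℝ)*Δ*f^7 + (-25088:ℝ)*Δ*y₁^2*f^5 + (25088:ℝ)*Δ*y₁^4*f^3 + (1568:ℝ)*Δ*y₁^6*f + (-1404928:ℝ)*(Real.sqrt 2)*Δ*f^7 + (-94080:ℝ)*(Real.sqrt 2)*Δ*y₁^2*f^5 + (40768:ℝ)*(Real.sqrt 2)*Δ*y₁^4*f^3 + (3528:ℝ)*(Real.sqrt 2)*Δ*y₁^6*f + (-702464:ℝ)*(Real.sqrt 2)^2*Δ*f^7 + (-112896:ℝ)*(Real.sqrt 2)^2*Δ*y₁^2*f^5 + (10976:ℝ)*(Real.sqrt 2)^2*Δ*y₁^4*f^3 + (1176:ℝ)*(Real.sqrt 2)^2*Δ*y₁^6*f + (-43904:ℝ)*(Real.sqrt 2)^3*Δ*y₁^2*f^5 + (-1960:ℝ)*(Real.sqrt 2)^3*Δ*y₁^6*f + (4704:ℝ)*(Real.sqrt 2)^4*Δ*y₁^4*f^3 + (-1176:ℝ)*(Real.sqrt 2)^4*Δ*y₁^6*f) * hs + ((-5488:ℝ)*Δ*f^3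 + (-1372:ℝ)*Δ*y₁^2*f + (-16464:ℝ)*(Real.sqrt 2)*Δ*f^3 + (-4116:ℝ)*(Real.sqrt 2)*Δ*y₁^2*f + (-16464:ℝ)*(Real.sqrt 2)^2*Δ*f^3 + (-4116:ℝ)*(Real.sqrt 2)^2*Δ*y₁^2*f + (-5488:ℝ)*(Real.sqrt 2)^3*Δ*f^3 + (-1372:ℝ)*(Real.sqrt 2)^3*Δ*y₁^2*f) * hΔ2
  have hfin : u * H.1 = u * f := mul_left_cancel₀ hN (hlin.trans hE)
  exact mul_left_cancel₀ hu hfin
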